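/- Let d be a rational number and Ɓ a finite list of pairs of coprime integers (r,a) with 0 < a < r, and let P_{d,Ɓ}(t) ∈ ℚ⟦t⟧ be the K3 Hilbert series. Then the constant coefficient of P_{d,Ɓ} equals 1, and for every integer n ≥ 1 the coefficient of t^n in P_{d,Ɓ} equals 2 + n^2·d/2 − Σ_{(r,a)∈Ɓ} \overline{bn}(r - \overline{bn})/(2r), where for each pair b is the inverse of a modulo r and \overline{m} denotes the least nonnegative residue of m modulo r. -/

import Mathlib

/-- The K3 Hilbert series `P_{d,Ɓ}` as a formal power series in `ℚ⟦t⟧`, where the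
basket is recorded as a list of pairs `(r, b)` (with `b` the inverse mod `r` of the
singularity type `a`), and `\overline{m}` is the least nonnegative residue mod `r`. -/
noncomputable def K3HilbertSeries (d : ℚ) (B : List (ℕ × ℕ)) : PowerSeries ℚ :=
  (1 + PowerSeries.X) * (1 - PowerSeries.X)⁻¹
    + PowerSeries.X * (1 + PowerSeries.X) * ((1 - PowerSeries.X) ^ 3)⁻¹
        * PowerSeries.C (d / 2)
    - (B.map (fun p =>
        (1 - PowerSeries.X ^ p.1)⁻¹ *
          ∑ i ∈ Finset.Icc 1 (p.1 - 1),
            PowerSeries.C ((((p.2 * i) % p.1 : ℕ) : ℚ)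
                * ((p.1 : ℚ) - (((p.2 * i) % p.1 : ℕ) : ℚ)) / (2 * (p.1 : ℚ)))
              * PowerSeries.X ^ i)).sum

namespace K3aux

open PowerSeries Finset

variable {k : Type*} [Field k]

lemma geo_prod (r : ℕ) (hr : 1 ≤ r) (c : ℕ → k) (hc0 : c 0 = 0)
    (hper : ∀ n, c n = c (n % r)) :
    (1 - X^r : k⟦X⟧)⁻¹ * ∑ i ∈ Finset.Icc 1 (r-1), PowerSeries.C (c i) * X ^ i
      = PowerSeries.mk c := by
  have hconst : PowerSeries.constantCoeff (R := k) (1 - X ^ r) ≠ 0 := by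
    simp only [map_sub, map_one, map_pow, constantCoeff_X, zero_pow (by omega : r ≠ 0), sub_zero]
    exact one_ne_zero
  have key : (1 - X^r : k⟦X⟧) * PowerSeries.mk c
      = ∑ i ∈ Finset.Icc 1 (r-1), PowerSeries.C (c i) * X ^ i := by
    ext n
    rw [sub_mul, one_mul, map_sub, coeff_mk, coeff_X_pow_mul', map_sum]
    have hcoeff : ∀ i ∈ Finset.Icc 1 (r-1),
        (PowerSeries.coeff n) (PowerSeries.C (c i) * X ^ i)
          = if n = i then c i else 0 := by
      intro i _
      rw [coeff_C_mul, coeff_X_pow]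
      split_ifs <;> simp
    rw [Finset.sum_congr rfl hcoeff, Finset.sum_ite_eq]
    simp only [coeff_mk, Finset.mem_Icc]
    split_ifs with h1 h2 h3
    · omega
    · rw [hper n, hper (n - r), Nat.mod_eq_sub_mod h1]
      ring
    · ring
    · have : n = 0 := by omega
      rw [this, hc0, sub_zero]
  calc (1 - X^r : k⟦X⟧)⁻¹ * ∑ i ∈ Finset.Icc 1 (r-1), PowerSeries.C (c i) * X ^ i
      = (1 - X^r : k⟦X⟧)⁻¹ * ((1 - X^r) * PowerSeries.mk c) := by rw [key]
    _ = PowerSeries.mk c := by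
        rw [← mul_assoc, PowerSeries.inv_mul_cancel _ hconst, one_mul]

lemma one_add_X_mul_inv : (1 + X : k⟦X⟧) * (1 - X)⁻¹
    = PowerSeries.mk (fun n => if n = 0 then 1 else 2) := by
  have hconst : PowerSeries.constantCoeff (R := k) (1 - X) ≠ 0 := by simp
  have key : PowerSeries.mk (fun n => if n = 0 then (1:k) else 2) * (1 - X) = 1 + X := by
    ext n
    rw [mul_sub, mul_one, map_sub, coeff_mk, ← pow_one (X : k⟦X⟧), coeff_mul_X_pow',
      coeff_mk, map_add, coeff_one, coeff_X_pow]
    rcases n with _ | _ | n <;> norm_num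
  calc (1 + X : k⟦X⟧) * (1 - X)⁻¹
      = PowerSeries.mk (fun n => if n = 0 then (1:k) else 2) * ((1 - X) * (1 - X)⁻¹) := by
        rw [← key, mul_assoc]
    _ = _ := by rw [PowerSeries.mul_inv_cancel _ hconst, mul_one]

lemma X_mul_one_add_X_mul_inv : (X * (1 + X) : k⟦X⟧) * ((1 - X) ^ 3)⁻¹
    = PowerSeries.mk (fun n => (n : k)^2) := by
  have hconst : PowerSeries.constantCoeff (R := k) ((1 - X) ^ 3) ≠ 0 := by simp
  have key : PowerSeries.mk (fun n => ((n : k))^2) * (1 - X) ^ 3 = X * (1 + X) := by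
    have hexp : ((1 - X : k⟦X⟧)) ^ 3
        = 1 - 3 * X ^ 1 + 3 * X ^ 2 - X ^ 3 := by ring
    ext n
    rw [hexp]
    have hc : ∀ m : ℕ, (PowerSeries.coeff n)
        (PowerSeries.mk (fun n => ((n : k))^2) * X ^ m)
          = if m ≤ n then ((n - m : ℕ) : k)^2 else 0 := by
      intro m
      rw [coeff_mul_X_pow']
      split_ifs <;> simp
    have : (PowerSeries.coeff n) (PowerSeries.mk (fun n => ((n : k))^2)
        * (1 - 3 * X ^ 1 + 3 * X ^ 2 - X ^ 3))
        = (n : k)^2 - 3 * (if 1 ≤ n then ((n - 1 : ℕ) : k)^2 else 0)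
          + 3 * (if 2 ≤ n then ((n - 2 : ℕ) : k)^2 else 0)
          - (if 3 ≤ n then ((n - 3 : ℕ) : k)^2 else 0) := by
      rw [mul_sub, mul_add, mul_sub, mul_one, map_sub, map_add, map_sub]
      rw [show PowerSeries.mk (fun n => ((n : k))^2) * (3 * X ^ 1)
          = 3 * (PowerSeries.mk (fun n => ((n : k))^2) * X ^ 1) by ring]
      rw [show PowerSeries.mk (fun n => ((n : k))^2) * (3 * X ^ 2)
          = 3 * (PowerSeries.mk (fun n => ((n : k))^2) * X ^ 2) by ring]
      rw [show (3:k⟦X⟧) = PowerSeries.C 3 from (map_ofNat (PowerSeries.C (R := k)) 3).symm]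
      rw [coeff_C_mul, coeff_C_mul, hc, hc, hc, coeff_mk]
    rw [this, show (X * (1 + X) : k⟦X⟧) = X ^ 1 + X ^ 2 by ring, map_add,
      coeff_X_pow, coeff_X_pow]
    rcases n with _ | _ | _ | n <;>
      norm_num <;> push_cast <;> ring
  calc (X * (1 + X) : k⟦X⟧) * ((1 - X) ^ 3)⁻¹
      = PowerSeries.mk (fun n => ((n : k))^2) * ((1 - X) ^ 3 * ((1 - X) ^ 3)⁻¹) := by
        rw [← key, mul_assoc]
    _ = _ := by rw [PowerSeries.mul_inv_cancel _ hconst, mul_one]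

end K3aux

/-- The coefficients of the K3 Hilbert series: the constant term is `1`
and for `n ≥ 1` the coefficient of `tⁿ` is
`2 + n²d/2 − Σ_{(r,a)∈Ɓ} \overline{bn}(r-\overline{bn})/(2r)`.
The basket is given as a list of triples `(r, a, b)` with `0 < a < r`,
`gcd(a,r) = 1` and `b` the inverse of `a` mod `r`. -/
theorem k3_hilbert_series_coeff (d : ℚ) (B : List (ℕ × ℕ × ℕ))
    (hB : ∀ p ∈ B, 0 < p.2.1 ∧ p.2.1 < p.1 ∧ Nat.Coprime p.2.1 p.1 ∧
      1 ≤ p.2.2 ∧ p.2.2 ≤ p.1 - 1 ∧ (p.2.1 * p.2.2) % p.1 = 1) :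
    PowerSeries.coeff 0 (K3HilbertSeries d (B.map fun p => (p.1, p.2.2))) = 1 ∧
    ∀ n : ℕ, 1 ≤ n →
      PowerSeries.coeff n (K3HilbertSeries d (B.map fun p => (p.1, p.2.2))) =
        2 + (n : ℚ) ^ 2 * d / 2
          - (B.map (fun p => (((p.2.2 * n) % p.1 : ℕ) : ℚ)
              * ((p.1 : ℚ) - (((p.2.2 * n) % p.1 : ℕ) : ℚ)) / (2 * (p.1 : ℚ)))).sum := by
  classical
  set f : ℕ × ℕ × ℕ → ℕ → ℚ := fun p n =>
    (((p.2.2 * n) % p.1 : ℕ) : ℚ) * ((p.1 : ℚ) - (((p.2.2 * n) % p.1 : ℕ) : ℚ))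
      / (2 * (p.1 : ℚ)) with hf
  have hseries : K3HilbertSeries d (B.map fun p => (p.1, p.2.2))
      = PowerSeries.mk (fun n => if n = 0 then (1:ℚ) else 2)
        + PowerSeries.mk (fun n => ((n : ℚ))^2) * PowerSeries.C (d / 2)
        - (B.map (fun p => PowerSeries.mk (f p))).sum := by
    unfold K3HilbertSeries
    rw [K3aux.one_add_X_mul_inv, K3aux.X_mul_one_add_X_mul_inv, List.map_map]
    congr 1
    apply congrArg List.sum
    refine List.map_congr_left fun p hp => ?_
    obtain ⟨ha, har, -, hb1, hbr, -⟩ := hB p hp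
    have hr : 1 ≤ p.1 := by omega
    simp only [Function.comp]
    exact K3aux.geo_prod p.1 hr (f p)
      (by simp [hf])
      (by
        intro n
        simp only [hf]
        rw [show p.2.2 * n % p.1 = p.2.2 * (n % p.1) % p.1 by
          conv_lhs => rw [Nat.mul_mod]
          conv_rhs => rw [Nat.mul_mod, Nat.mod_mod_of_dvd _ dvd_rfl]])
  constructor
  · rw [hseries]
    rw [map_sub, map_add, PowerSeries.coeff_mk, map_list_sum, List.map_map]
    have h1 : (PowerSeries.coeff 0) (PowerSeries.mk (fun n => ((n : ℚ))^2)
        * PowerSeries.C (d / 2)) = 0 := by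
      rw [PowerSeries.coeff_mul_C, PowerSeries.coeff_mk]
      norm_num
    have h2 : (B.map (PowerSeries.coeff 0 ∘ fun p => PowerSeries.mk (f p))).sum = 0 := by
      apply List.sum_eq_zero
      intro x hx
      obtain ⟨p, hp, rfl⟩ := List.mem_map.mp hx
      simp [hf]
    rw [h1, h2]
    norm_num
  · intro n hn
    rw [hseries]
    rw [map_sub, map_add, PowerSeries.coeff_mk, map_list_sum, List.map_map]
    have h1 : (PowerSeries.coeff n) (PowerSeries.mk (fun n => ((n : ℚ))^2)
        * PowerSeries.C (d / 2)) = (n : ℚ)^2 * d / 2 := by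
      rw [PowerSeries.coeff_mul_C, PowerSeries.coeff_mk]
      ring
    have h2 : B.map (PowerSeries.coeff n ∘ fun p => PowerSeries.mk (f p))
        = B.map (fun p => f p n) := by
      apply List.map_congr_left
      intro p _
      simp
    rw [h1, h2, if_neg (by omega)]
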